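/- Let B be an m×m lower bidiagonal matrix with B_{11} = a₁₁, B_{21} = a₂₁, and write M = BBᵀ. Then for z with Im z > 0, the (1,1) resolvent entry satisfies R₁₁ = (M−z)⁻¹_{11} = 1/(a₁₁² − z − a₁₁²·a₂₁²·R̂₁₁/(1 + a₂₁²·R̂₁₁)), where R̂₁₁ = (M̂ − z)⁻¹_{11} and M̂ = B̂B̂ᵀ with B̂ the matrix obtained from B by deleting its first row and column. -/

import Mathlib

open Matrix

/-- A real symmetric matrix shifted by a non-real `z` is invertible. -/
private lemma sym_shift_isUnit_det {k : ℕ} (S : Matrix (Fin k) (Fin k) ℝ)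
    (hS : Sᵀ = S) (z : ℂ) (hz : z.im ≠ 0) :
    IsUnit ((S.map (fun t => (t : ℂ))) - z • 1).det := by
  rw [isUnit_iff_ne_zero]
  intro hdet
  obtain ⟨v, hv0, hv⟩ := Matrix.exists_mulVec_eq_zero_iff.mpr hdet
  set H : Matrix (Fin k) (Fin k) ℂ := S.map (fun t => (t : ℂ)) with hHdef
  have h1 : H *ᵥ v = z • v := by
    rwa [Matrix.sub_mulVec, Matrix.smul_mulVec, Matrix.one_mulVec, sub_eq_zero] at hv
  have hherm : Hᴴ = H := by
    ext i j
    simp only [hHdef, Matrix.conjTranspose_apply, Matrix.map_apply, Complex.star_def,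
      Complex.conj_ofReal]
    exact_mod_cast congrFun (congrFun hS i) j
  set t : ℂ := star v ⬝ᵥ v with htdef
  set q : ℂ := star v ⬝ᵥ (H *ᵥ v) with hqdef
  have hq : q = z * t := by
    rw [hqdef, h1, dotProduct_smul, htdef, smul_eq_mul]
  have hqstar : star q = q := by
    conv_lhs => rw [hqdef, Matrix.star_dotProduct, star_star, Matrix.star_mulVec, hherm]
    rw [hqdef, Matrix.dotProduct_mulVec]
  have ht : t = ((∑ i, Complex.normSq (v i) : ℝ) : ℂ) := by
    rw [htdef, dotProduct]
    push_cast
    refine Finset.sum_congr rfl fun i _ => ?_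
    rw [Pi.star_apply, Complex.star_def, mul_comm, Complex.mul_conj]
  have htim : t.im = 0 := by rw [ht]; exact Complex.ofReal_im _
  have htre : t.re ≠ 0 := by
    rw [ht, Complex.ofReal_re]
    intro h
    apply hv0
    funext i
    have := (Finset.sum_eq_zero_iff_of_nonneg
      (fun j _ => Complex.normSq_nonneg (v j))).mp h i (Finset.mem_univ i)
    exact Complex.normSq_eq_zero.mp this
  have hqim : (z * t).im = 0 := by
    have h := congrArg Complex.im hqstar
    rw [hq] at h
    simp only [Complex.star_def, Complex.conj_im] at h
    linarith
  rw [Complex.mul_im, htim, mul_zero, zero_add] at hqim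
  rcases mul_eq_zero.mp hqim with h | h
  · exact hz h
  · exact htre h

theorem bidiagonal_resolvent_recursion (n : ℕ)
    (B : Matrix (Fin (n + 2)) (Fin (n + 2)) ℝ)
    (hbi : ∀ i j : Fin (n + 2), ¬(i = j ∨ (i : ℕ) = (j : ℕ) + 1) → B i j = 0)
    (z : ℂ) (hz : 0 < z.im) :
    (((B * Bᵀ).map (fun t => (t : ℂ)) -
        z • (1 : Matrix (Fin (n + 2)) (Fin (n + 2)) ℂ))⁻¹) 0 0 =
      1 / ((B 0 0 : ℂ) ^ 2 - z -
        (B 0 0 : ℂ) ^ 2 * (B 1 0 : ℂ) ^ 2 *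
          ((((B.submatrix Fin.succ Fin.succ) * (B.submatrix Fin.succ Fin.succ)ᵀ).map
              (fun t => (t : ℂ)) - z • (1 : Matrix (Fin (n + 1)) (Fin (n + 1)) ℂ))⁻¹) 0 0 /
          (1 + (B 1 0 : ℂ) ^ 2 *
            ((((B.submatrix Fin.succ Fin.succ) * (B.submatrix Fin.succ Fin.succ)ᵀ).map
                (fun t => (t : ℂ)) -
              z • (1 : Matrix (Fin (n + 1)) (Fin (n + 1)) ℂ))⁻¹) 0 0)) := by
  have hzim : z.im ≠ 0 := ne_of_gt hz
  set c : ℝ → ℂ := fun t => (t : ℂ) with hc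
  -- basic vanishing facts about B
  have hB0row : ∀ j : Fin (n + 2), j ≠ 0 → B 0 j = 0 := by
    intro j hj
    apply hbi
    rintro (h | h)
    · exact hj h.symm
    · simp at h
  have hBcol : ∀ i : Fin (n + 2), (i : ℕ) ≠ 0 → (i : ℕ) ≠ 1 → B i 0 = 0 := by
    intro i h0 h1
    apply hbi
    rintro (h | h)
    · exact h0 (by simp [h])
    · exact h1 (by simpa using h)
  -- the matrices
  set A : Matrix (Fin (n + 2)) (Fin (n + 2)) ℂ :=
    (B * Bᵀ).map c - z • 1 with hA
  set Bh : Matrix (Fin (n + 1)) (Fin (n + 1)) ℝ := B.submatrix Fin.succ Fin.succ with hBh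
  set Ah : Matrix (Fin (n + 1)) (Fin (n + 1)) ℂ := (Bh * Bhᵀ).map c - z • 1 with hAh
  set D : Matrix (Fin (n + 1)) (Fin (n + 1)) ℂ :=
    ((B * Bᵀ).submatrix Fin.succ Fin.succ).map c - z • 1 with hD
  -- invertibility
  have hsymm : (B * Bᵀ)ᵀ = B * Bᵀ := by rw [Matrix.transpose_mul, Matrix.transpose_transpose]
  have hsymm2 : ((B * Bᵀ).submatrix Fin.succ Fin.succ)ᵀ = (B * Bᵀ).submatrix Fin.succ Fin.succ := by
    ext i j
    simp [Matrix.transpose_apply]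
    exact congrFun (congrFun hsymm i.succ) j.succ
  have hsymm3 : (Bh * Bhᵀ)ᵀ = Bh * Bhᵀ := by rw [Matrix.transpose_mul, Matrix.transpose_transpose]
  have hAdet : IsUnit A.det := sym_shift_isUnit_det _ hsymm z hzim
  have hDdet : IsUnit D.det := sym_shift_isUnit_det _ hsymm2 z hzim
  have hAhdet : IsUnit Ah.det := sym_shift_isUnit_det _ hsymm3 z hzim
  set R : Matrix (Fin (n + 2)) (Fin (n + 2)) ℂ := A⁻¹ with hR
  set G : Matrix (Fin (n + 1)) (Fin (n + 1)) ℂ := D⁻¹ with hG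
  set Rh : Matrix (Fin (n + 1)) (Fin (n + 1)) ℂ := Ah⁻¹ with hRh
  have hRA : R * A = 1 := Matrix.nonsing_inv_mul A hAdet
  have hDG : D * G = 1 := Matrix.mul_nonsing_inv D hDdet
  have hRhAh : Rh * Ah = 1 := Matrix.nonsing_inv_mul Ah hAhdet
  -- entries of M = B * Bᵀ in row/column 0
  have hMc0 : ∀ i : Fin (n + 2), (B * Bᵀ) i 0 = B i 0 * B 0 0 := by
    intro i
    rw [Matrix.mul_apply]
    rw [Finset.sum_eq_single 0]
    · simp
    · intro l _ hl
      rw [Matrix.transpose_apply, hB0row l hl, mul_zero]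
    · simp
  have hMr0 : ∀ j : Fin (n + 2), (B * Bᵀ) 0 j = B 0 0 * B j 0 := by
    intro j
    have := congrFun (congrFun hsymm j) 0
    rw [Matrix.transpose_apply] at this
    rw [this, hMc0]
    ring
  -- the r vector : first row of R restricted
  set a : ℂ := (B 0 0 : ℂ) with ha
  set b : ℂ := (B 1 0 : ℂ) with hb
  -- row equations: for each j, ∑ k, R 0 k * A k j.succ = 0
  have hrowD : (fun i => R 0 i.succ) ᵥ* D = fun j => -(R 0 0 * (a * b)) * (if j = 0 then 1 else 0) := by
    funext j
    have hmain : ∑ k, R 0 k * A k j.succ = 0 := by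
      have := congrFun (congrFun hRA 0) j.succ
      rw [Matrix.mul_apply] at this
      rw [this, Matrix.one_apply_ne (Fin.succ_ne_zero j).symm]
    rw [Fin.sum_univ_succ] at hmain
    have hD_eq : ∀ i : Fin (n + 1), D i j = A i.succ j.succ := by
      intro i
      simp [hD, hA, Matrix.sub_apply, Matrix.map_apply, Matrix.submatrix_apply,
        Matrix.smul_apply, Matrix.one_apply, Fin.succ_inj]
    have hA0succ : A 0 j.succ = (a * b) * (if j = 0 then 1 else 0) := by
      have h1 : (1 : Matrix (Fin (n+2)) (Fin (n+2)) ℂ) 0 j.succ = 0 :=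
        Matrix.one_apply_ne (Fin.succ_ne_zero j).symm
      simp only [hA, Matrix.sub_apply, Matrix.map_apply, Matrix.smul_apply, h1, smul_zero,
        sub_zero]
      rw [hMr0]
      by_cases hj : j = 0
      · subst hj
        simp only [if_pos rfl, mul_one, hc, ha, hb]
        push_cast
        rw [Fin.succ_zero_eq_one]
        ring
      · rw [hBcol j.succ (by rw [Fin.val_succ]; omega) (by
          simp only [Fin.val_succ]
          have hj' : (j : ℕ) ≠ 0 := fun h => hj (Fin.ext h)
          omega)]
        simp [hj, hc]
    rw [Matrix.vecMul, dotProduct]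
    simp_rw [hD_eq]
    have : ∑ i : Fin (n+1), R 0 i.succ * A i.succ j.succ = -(R 0 0 * A 0 j.succ) := by
      linear_combination hmain
    rw [this, hA0succ]
    ring
  have hr : ∀ j, R 0 j.succ = -(R 0 0 * (a * b)) * G 0 j := by
    intro j
    have h1 : (fun i => R 0 i.succ) ᵥ* (D * G) = (fun i => R 0 i.succ) := by
      rw [hDG, Matrix.vecMul_one]
    rw [← Matrix.vecMul_vecMul, hrowD] at h1
    have h2 := congrFun h1 j
    rw [← h2]
    rw [Matrix.vecMul, dotProduct]
    rw [Finset.sum_eq_single 0]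
    · simp
    · intro l _ hl
      simp [hl]
    · simp
  -- column equation
  have hcol : R 0 0 * A 0 0 + R 0 1 * A 1 0 = 1 := by
    have := congrFun (congrFun hRA 0) 0
    rw [Matrix.mul_apply, Matrix.one_apply_eq] at this
    rw [← this]
    rw [Fin.sum_univ_succ, Fin.sum_univ_succ]
    have hrest : ∀ i : Fin n, A i.succ.succ 0 = 0 := by
      intro i
      have h1 : (1 : Matrix (Fin (n+2)) (Fin (n+2)) ℂ) i.succ.succ 0 = 0 :=
        Matrix.one_apply_ne (by simp [Fin.ext_iff])
      simp only [hA, Matrix.sub_apply, Matrix.map_apply, Matrix.smul_apply, h1, smul_zero,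
        sub_zero]
      rw [hMc0, hBcol i.succ.succ (by simp [Fin.ext_iff]) (by simp)]
      simp [hc]
    rw [Finset.sum_eq_zero (fun i _ => by simp [hrest i])]
    rw [Fin.succ_zero_eq_one]
    ring
  -- identify A 0 0 and A 1 0
  have hA00 : A 0 0 = a ^ 2 - z := by
    simp only [hA, Matrix.sub_apply, Matrix.map_apply, Matrix.smul_apply, Matrix.one_apply_eq,
      smul_eq_mul, mul_one, hc]
    rw [hMr0]
    push_cast [ha]
    ring
  have hA10 : A 1 0 = a * b := by
    have h1 : (1 : Matrix (Fin (n+2)) (Fin (n+2)) ℂ) 1 0 = 0 :=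
      Matrix.one_apply_ne (by simp [Fin.ext_iff])
    simp only [hA, Matrix.sub_apply, Matrix.map_apply, Matrix.smul_apply, h1, smul_zero, sub_zero,
      hc]
    rw [hMc0]
    push_cast [ha, hb]
    ring
  -- main scalar equation
  have hmain : R 0 0 * (a ^ 2 - z - a ^ 2 * b ^ 2 * G 0 0) = 1 := by
    have h01 : R 0 1 = -(R 0 0 * (a * b)) * G 0 0 := by
      have := hr 0
      simpa using this
    calc R 0 0 * (a ^ 2 - z - a ^ 2 * b ^ 2 * G 0 0)
        = R 0 0 * (a ^ 2 - z) + (-(R 0 0 * (a * b)) * G 0 0) * (a * b) := by ring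
      _ = R 0 0 * A 0 0 + R 0 1 * A 1 0 := by rw [hA00, hA10, h01]
      _ = 1 := hcol
  -- relation between G 0 0 and Rh 0 0 (Sherman–Morrison)
  set E : Matrix (Fin (n + 1)) (Fin (n + 1)) ℂ :=
    Matrix.of (fun i j : Fin (n + 1) => if i = 0 ∧ j = 0 then b ^ 2 else 0) with hE
  have hDsplit : D = Ah + E := by
    ext i j
    have hM : (B * Bᵀ) i.succ j.succ
        = B i.succ 0 * B j.succ 0 + (Bh * Bhᵀ) i j := by
      rw [Matrix.mul_apply, Matrix.mul_apply, Fin.sum_univ_succ]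
      simp [hBh, Matrix.transpose_apply, Matrix.submatrix_apply]
    have hBs : ∀ i : Fin (n + 1), B i.succ 0 = if i = 0 then B 1 0 else 0 := by
      intro i
      by_cases hi : i = 0
      · subst hi; simp [Fin.succ_zero_eq_one]
      · rw [if_neg hi]
        exact hBcol i.succ (by rw [Fin.val_succ]; omega) (by
          simp only [Fin.val_succ]
          have : (i : ℕ) ≠ 0 := fun h => hi (Fin.ext h)
          omega)
    simp only [hD, hAh, hE, Matrix.sub_apply, Matrix.map_apply, Matrix.submatrix_apply,
      Matrix.add_apply, Matrix.of_apply, hc]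
    rw [hM, hBs i, hBs j]
    by_cases hi : i = 0 <;> by_cases hj : j = 0 <;>
      · simp only [hi, hj, if_true, if_false, and_true, and_false, true_and, false_and,
          if_neg, hb]
        push_cast
        ring
  have hEG : ∀ k : Fin (n + 1), (E * G) k 0 = if k = 0 then b ^ 2 * G 0 0 else 0 := by
    intro k
    rw [Matrix.mul_apply, Finset.sum_eq_single 0]
    · by_cases hk : k = 0 <;> simp [hE, hk]
    · intro l _ hl
      simp [hE, hl]
    · simp
  have h4 : (Rh * (E * G)) 0 0 = b ^ 2 * (Rh 0 0 * G 0 0) := by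
    rw [Matrix.mul_apply, Finset.sum_eq_single 0]
    · rw [hEG]
      simp only [if_pos rfl, ite_true]
      ring
    · intro k _ hk
      rw [hEG, if_neg hk, mul_zero]
    · simp
  have hGRh : G 0 0 * (1 + b ^ 2 * Rh 0 0) = Rh 0 0 := by
    have hsum : (1 : Matrix (Fin (n+1)) (Fin (n+1)) ℂ) = Ah * G + E * G := by
      rw [← Matrix.add_mul, ← hDsplit, hDG]
    have h1 : Ah * G = 1 - E * G := eq_sub_of_add_eq hsum.symm
    have h2 : G = Rh - Rh * (E * G) := by
      calc G = (Rh * Ah) * G := by rw [hRhAh, Matrix.one_mul]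
        _ = Rh * (Ah * G) := by rw [Matrix.mul_assoc]
        _ = Rh * (1 - E * G) := by rw [h1]
        _ = Rh - Rh * (E * G) := by rw [Matrix.mul_sub, Matrix.mul_one]
    have h3 := congrFun (congrFun h2 0) 0
    rw [Matrix.sub_apply, h4] at h3
    linear_combination h3
  -- denominators nonzero
  have hden2 : (1 : ℂ) + b ^ 2 * Rh 0 0 ≠ 0 := by
    intro h
    rw [h, mul_zero] at hGRh
    rw [← hGRh] at h
    simp at h
  have hG00 : G 0 0 = Rh 0 0 / (1 + b ^ 2 * Rh 0 0) := by
    rw [eq_div_iff hden2]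
    exact hGRh
  have hden1 : a ^ 2 - z - a ^ 2 * b ^ 2 * G 0 0 ≠ 0 := by
    intro h
    rw [h, mul_zero] at hmain
    exact one_ne_zero hmain.symm
  have hfinal : R 0 0 = 1 / (a ^ 2 - z - a ^ 2 * b ^ 2 * G 0 0) := by
    field_simp
    linear_combination hmain
  rw [hfinal, hG00, mul_div_assoc]
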